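/- The resultant of the polynomials u^2 + uv + v^2 and 2u^3 + v^3 with respect to u is 9v^6, and the resultant with respect to v is 9u^6. Consequently, if u and v are coprime integers, then gcd(u^2 + uv + v^2, 2u^3 + v^3) divides 9. -/

import Mathlib

open Polynomial

/-- The Sylvester matrix of two polynomials `f`, `g` regarded as having degrees `m`
and `n` respectively: an `(m + n) × (m + n)` matrix whose first `n` rows carry the
coefficients of `f` (in descending order, shifted) and whose last `m` rows carry the
coefficients of `g`. -/
def sylvesterMatrix {R : Type*} [CommRing R] (f g : R[X]) (m n : ℕ) :
    Matrix (Fin (m + n)) (Fin (m + n)) R := fun i j =>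
  if (i : ℕ) < n then
    (if (i : ℕ) ≤ (j : ℕ) ∧ (j : ℕ) ≤ (i : ℕ) + m then f.coeff (m - ((j : ℕ) - (i : ℕ)))
     else 0)
  else
    (if (i : ℕ) - n ≤ (j : ℕ) ∧ (j : ℕ) ≤ ((i : ℕ) - n) + n then
      g.coeff (n - ((j : ℕ) - ((i : ℕ) - n)))
     else 0)

/-- The resultant of two polynomials of degrees `m` and `n`, as the determinant of
their Sylvester matrix. -/
def resultantAux {R : Type*} [CommRing R] (f g : R[X]) (m n : ℕ) : R :=
  (sylvesterMatrix f g m n).det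

set_option maxHeartbeats 2000000 in
private lemma syl1 :
    sylvesterMatrix
      (X ^ 2 + C Polynomial.X * X + C (Polynomial.X ^ 2) : (Polynomial ℤ)[X])
      (C 2 * X ^ 3 + C (Polynomial.X ^ 3)) 2 3 =
    !![1, Polynomial.X, Polynomial.X ^ 2, 0, 0;
       0, 1, Polynomial.X, Polynomial.X ^ 2, 0;
       0, 0, 1, Polynomial.X, Polynomial.X ^ 2;
       2, 0, 0, Polynomial.X ^ 3, 0;
       0, 2, 0, 0, Polynomial.X ^ 3] := by
  funext i j
  fin_cases i <;> fin_cases j <;>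
    simp [sylvesterMatrix, ← C_pow, -C_pow, -map_pow, coeff_add, coeff_C_mul, coeff_C,
      coeff_X, coeff_X_pow, Matrix.vecHead, Matrix.vecTail]

set_option maxHeartbeats 2000000 in
private lemma syl2 :
    sylvesterMatrix
      (C (Polynomial.X ^ 2) + C Polynomial.X * X + X ^ 2 : (Polynomial ℤ)[X])
      (C (2 * Polynomial.X ^ 3) + X ^ 3) 2 3 =
    !![1, Polynomial.X, Polynomial.X ^ 2, 0, 0;
       0, 1, Polynomial.X, Polynomial.X ^ 2, 0;
       0, 0, 1, Polynomial.X, Polynomial.X ^ 2;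
       1, 0, 0, 2 * Polynomial.X ^ 3, 0;
       0, 1, 0, 0, 2 * Polynomial.X ^ 3] := by
  funext i j
  fin_cases i <;> fin_cases j <;>
    simp [sylvesterMatrix, ← C_pow, -C_pow, -map_pow, coeff_add, coeff_C_mul, coeff_C,
      coeff_X, coeff_X_pow, Matrix.vecHead, Matrix.vecTail]

set_option maxHeartbeats 2000000 in
private lemma det1 :
    (!![1, Polynomial.X, Polynomial.X ^ 2, 0, 0;
       0, 1, Polynomial.X, Polynomial.X ^ 2, 0;
       0, 0, 1, Polynomial.X, Polynomial.X ^ 2;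
       2, 0, 0, Polynomial.X ^ 3, 0;
       0, 2, 0, 0, Polynomial.X ^ 3] : Matrix (Fin 5) (Fin 5) ℤ[X]).det
      = 9 * Polynomial.X ^ 6 := by
  simp [Matrix.det_succ_row_zero, Fin.sum_univ_succ, Fin.succAbove]
  ring

set_option maxHeartbeats 2000000 in
private lemma det2 :
    (!![1, Polynomial.X, Polynomial.X ^ 2, 0, 0;
       0, 1, Polynomial.X, Polynomial.X ^ 2, 0;
       0, 0, 1, Polynomial.X, Polynomial.X ^ 2;
       1, 0, 0, 2 * Polynomial.X ^ 3, 0;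
       0, 1, 0, 0, 2 * Polynomial.X ^ 3] : Matrix (Fin 5) (Fin 5) ℤ[X]).det
      = 9 * Polynomial.X ^ 6 := by
  simp [Matrix.det_succ_row_zero, Fin.sum_univ_succ, Fin.succAbove]
  ring

set_option maxRecDepth 10000 in
/-- The resultant of `u² + uv + v²` and `2u³ + v³` with respect to `u` is `9v⁶`, the
resultant with respect to `v` is `9u⁶`; consequently, for coprime integers `u, v`,
`gcd(u² + uv + v², 2u³ + v³)` divides `9`. -/
theorem resultant_nine :
    -- resultant in u: coefficients in ℤ[v]
    resultantAux
      (X ^ 2 + C Polynomial.X * X + C (Polynomial.X ^ 2) : (Polynomial ℤ)[X])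
      (C 2 * X ^ 3 + C (Polynomial.X ^ 3)) 2 3 = 9 * Polynomial.X ^ 6 ∧
    -- resultant in v: coefficients in ℤ[u]
    resultantAux
      (C (Polynomial.X ^ 2) + C Polynomial.X * X + X ^ 2 : (Polynomial ℤ)[X])
      (C (2 * Polynomial.X ^ 3) + X ^ 3) 2 3 = 9 * Polynomial.X ^ 6 ∧
    ∀ u v : ℤ, IsCoprime u v →
      (Int.gcd (u ^ 2 + u * v + v ^ 2) (2 * u ^ 3 + v ^ 3) : ℤ) ∣ 9 := by
  refine ⟨by rw [resultantAux, syl1]; exact det1, by rw [resultantAux, syl2]; exact det2, ?_⟩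
  intro u v huv
  set a : ℤ := u ^ 2 + u * v + v ^ 2 with ha
  set b : ℤ := 2 * u ^ 3 + v ^ 3 with hb
  have hda : (Int.gcd a b : ℤ) ∣ a := Int.gcd_dvd_left a b
  have hdb : (Int.gcd a b : ℤ) ∣ b := Int.gcd_dvd_right a b
  have h3u : (Int.gcd a b : ℤ) ∣ 3 * u ^ 3 := by
    have : 3 * u ^ 3 = b + (u - v) * a := by rw [ha, hb]; ring
    rw [this]; exact dvd_add hdb (Dvd.dvd.mul_left hda _)
  have h3v : (Int.gcd a b : ℤ) ∣ 3 * v ^ 3 := by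
    have : 3 * v ^ 3 = b - 2 * (u - v) * a := by rw [ha, hb]; ring
    rw [this]; exact dvd_sub hdb (Dvd.dvd.mul_left hda _)
  have hc : IsCoprime (u ^ 3) (v ^ 3) := (huv.pow : IsCoprime (u ^ 3) (v ^ 3))
  obtain ⟨x, y, hxy⟩ := hc
  have h3 : (Int.gcd a b : ℤ) ∣ 3 := by
    have : (3 : ℤ) = x * (3 * u ^ 3) + y * (3 * v ^ 3) := by
      have := hxy
      linear_combination -3 * hxy
    rw [this]
    exact dvd_add (Dvd.dvd.mul_left h3u _) (Dvd.dvd.mul_left h3v _)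
  exact h3.trans (by norm_num)
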